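/- Let 1 ≤ p1, p2 < ∞, 1/p = 1/p1 + 1/p2, let w1, w2 be weights on ℝⁿ, and set w := w1^{p/p1}·w2^{p/p2}. Assume there exist constants c, C > 0 such that c·w(Q)^{1/p} ≤ w1(Q)^{1/p1}·w2(Q)^{1/p2} ≤ C·w(Q)^{1/p} for every cube Q ⊆ ℝⁿ. If there exists C' > 0 such that ‖M⊗(f,g)‖_{L^{p,∞}(w)} ≤ C' ‖f‖_{L^{p1,1}(w1)} ‖g‖_{L^{p2,1}(w2)} for all measurable functions f, g, then w1 ∈ A_{p1}^𝓡 and w2 ∈ A_{p2}^𝓡. -/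

import Mathlib

open MeasureTheory ENNReal Set

noncomputable section

/-- Euclidean space ℝⁿ. -/
abbrev Rn (n : ℕ) := EuclideanSpace ℝ (Fin n)

/-- An axis-parallel cube in ℝⁿ. -/
def IsCube {n : ℕ} (Q : Set (Rn n)) : Prop :=
  ∃ (c : Rn n) (r : ℝ), 0 < r ∧ Q = {x : Rn n | ∀ i, |x i - c i| ≤ r}

/-- A weight: a positive locally integrable function. -/
def IsWeight {n : ℕ} (w : Rn n → ℝ) : Prop :=
  (∀ x, 0 < w x) ∧ MeasureTheory.LocallyIntegrable w volume

/-- v(F) = ∫_F v. -/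
def wSet {n : ℕ} (v : Rn n → ℝ) (F : Set (Rn n)) : ℝ≥0∞ :=
  ∫⁻ x in F, ENNReal.ofReal (v x)

/-- Distribution function of an ℝ≥0∞-valued function w.r.t. the weight v. -/
def distrib {n : ℕ} (v : Rn n → ℝ) (f : Rn n → ℝ≥0∞) (t : ℝ) : ℝ≥0∞ :=
  wSet v {x | ENNReal.ofReal t < f x}

/-- Weak Lorentz quasinorm ‖f‖_{L^{p,∞}(v)} = sup_{y>0} y · v({f > y})^{1/p}. -/
def wLpInfty {n : ℕ} (p : ℝ) (v : Rn n → ℝ) (f : Rn n → ℝ≥0∞) : ℝ≥0∞ :=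
  ⨆ (y : ℝ) (_ : 0 < y), ENNReal.ofReal y * (distrib v f y) ^ (1 / p)

/-- Lorentz norm ‖f‖_{L^{p,1}(v)} = p ∫₀^∞ v({f > y})^{1/p} dy. -/
def wLp1 {n : ℕ} (p : ℝ) (v : Rn n → ℝ) (f : Rn n → ℝ≥0∞) : ℝ≥0∞ :=
  ENNReal.ofReal p * ∫⁻ y in Set.Ioi (0 : ℝ), (distrib v f y) ^ (1 / p)

/-- Lebesgue norm ‖f‖_{L^p(v)} = (∫ f^p v)^{1/p}. -/
def wLp {n : ℕ} (p : ℝ) (v : Rn n → ℝ) (f : Rn n → ℝ≥0∞) : ℝ≥0∞ :=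
  (∫⁻ x, (f x) ^ p * ENNReal.ofReal (v x)) ^ (1 / p)

/-- ‖f‖_{L^∞(v)}: essential supremum with respect to the measure with density v. -/
def wLinfty {n : ℕ} (v : Rn n → ℝ) (f : Rn n → ℝ≥0∞) : ℝ≥0∞ :=
  essSup f (volume.withDensity fun x => ENNReal.ofReal (v x))

/-- |f| as an ℝ≥0∞-valued function. -/
def ennAbs {n : ℕ} (f : Rn n → ℝ) : Rn n → ℝ≥0∞ := fun x => ENNReal.ofReal |f x|

/-- The Hardy–Littlewood maximal operator over cubes. -/
def maximal {n : ℕ} (f : Rn n → ℝ) (x : Rn n) : ℝ≥0∞ :=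
  ⨆ (Q : Set (Rn n)) (_ : IsCube Q) (_ : x ∈ Q),
    (volume Q)⁻¹ * ∫⁻ y in Q, ENNReal.ofReal |f y|

/-- The 2-fold product of Hardy–Littlewood maximal operators. -/
def Mprod {n : ℕ} (f g : Rn n → ℝ) (x : Rn n) : ℝ≥0∞ :=
  maximal f x * maximal g x

/-- The Muckenhoupt A_p constant, 1 < p. -/
def ApConst {n : ℕ} (p : ℝ) (v : Rn n → ℝ) : ℝ≥0∞ :=
  ⨆ (Q : Set (Rn n)) (_ : IsCube Q),
    ((volume Q)⁻¹ * ∫⁻ x in Q, ENNReal.ofReal (v x)) *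
      ((volume Q)⁻¹ * ∫⁻ x in Q, ENNReal.ofReal (v x ^ (1 - p / (p - 1)))) ^ (p - 1)

/-- The Muckenhoupt A₁ condition: Mv ≤ C v a.e. -/
def MemA1 {n : ℕ} (v : Rn n → ℝ) : Prop :=
  ∃ C : ℝ, ∀ᵐ x ∂(volume : Measure (Rn n)), maximal v x ≤ ENNReal.ofReal (C * v x)

/-- Membership in the Muckenhoupt class A_p, 1 ≤ p < ∞. -/
def MemAp {n : ℕ} (p : ℝ) (v : Rn n → ℝ) : Prop :=
  (p = 1 ∧ MemA1 v) ∨ (1 < p ∧ ApConst p v ≠ ∞)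

/-- Membership in A_∞ = ∪_{p ≥ 1} A_p. -/
def MemAinfty {n : ℕ} (v : Rn n → ℝ) : Prop :=
  ∃ p : ℝ, 1 ≤ p ∧ MemAp p v

/-- The A_p^𝓡 constant: sup_Q v(Q)^{1/p} ‖χ_Q v⁻¹‖_{L^{p',∞}(v)} / |Q|, with p' = ∞ if p = 1. -/
def AprConst {n : ℕ} (p : ℝ) (v : Rn n → ℝ) : ℝ≥0∞ :=
  ⨆ (Q : Set (Rn n)) (_ : IsCube Q),
    (wSet v Q) ^ (1 / p) *
      (if p = 1 then wLinfty v (Q.indicator fun y => ENNReal.ofReal (v y)⁻¹)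
        else wLpInfty (p / (p - 1)) v (Q.indicator fun y => ENNReal.ofReal (v y)⁻¹)) /
      volume Q

/-- Membership in the restricted weak type class A_p^𝓡. -/
def MemApR {n : ℕ} (p : ℝ) (v : Rn n → ℝ) : Prop :=
  AprConst p v ≠ ∞

/-- The bilinear Hardy–Littlewood maximal operator of Calderón. -/
def bilinearM {n : ℕ} (f g : Rn n → ℝ) (x : Rn n) : ℝ≥0∞ :=
  ⨆ (r : ℝ) (_ : 0 < r),
    (volume (Metric.ball (0 : Rn n) r))⁻¹ *
      ∫⁻ y in Metric.ball (0 : Rn n) r, ENNReal.ofReal (|f (x - y)| * |g (x + y)|)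

end
lemma abs_coord_le {n : ℕ} (y : Rn n) (i : Fin n) : |y i| ≤ ‖y‖ := by
  rw [EuclideanSpace.norm_eq]
  have h1 : |y i| = Real.sqrt (‖y i‖ ^ 2) := by
    rw [Real.sqrt_sq_eq_abs]; simp
  rw [h1]
  apply Real.sqrt_le_sqrt
  exact Finset.single_le_sum (f := fun j => ‖y j‖ ^ 2) (fun j _ => by positivity)
    (Finset.mem_univ i)

lemma cube_facts {n : ℕ} {Q : Set (Rn n)} (hQ : IsCube Q) :
    MeasurableSet Q ∧ 0 < volume Q ∧ volume Q < ∞ ∧ IsCompact Q := by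
  obtain ⟨c, r, hr, rfl⟩ := hQ
  have hcont : ∀ i : Fin n, Continuous fun x : Rn n => x i := fun i =>
    (EuclideanSpace.proj i).continuous
  have hclosed : IsClosed {x : Rn n | ∀ i, |x i - c i| ≤ r} := by
    have : {x : Rn n | ∀ i, |x i - c i| ≤ r} = ⋂ i, {x : Rn n | |x i - c i| ≤ r} := by
      ext x; simp
    rw [this]
    exact isClosed_iInter fun i =>
      isClosed_le (((hcont i).sub continuous_const).abs) continuous_const
  have hsub : Metric.ball c r ⊆ {x : Rn n | ∀ i, |x i - c i| ≤ r} := by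
    intro x hx i
    have h1 : |x i - c i| ≤ ‖x - c‖ := by
      have : x i - c i = (x - c) i := by simp
      rw [this]; exact abs_coord_le _ i
    have h2 : ‖x - c‖ < r := by rwa [Metric.mem_ball, dist_eq_norm] at hx
    linarith
  have hbdd : {x : Rn n | ∀ i, |x i - c i| ≤ r} ⊆ Metric.closedBall c (Real.sqrt (n * r ^ 2)) := by
    intro x hx
    rw [Metric.mem_closedBall, dist_eq_norm, EuclideanSpace.norm_eq]
    apply Real.sqrt_le_sqrt
    calc ∑ i, ‖(x - c) i‖ ^ 2 ≤ ∑ _i : Fin n, r ^ 2 := by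
          apply Finset.sum_le_sum
          intro i _
          have h1 : ‖(x - c) i‖ = |x i - c i| := by simp
          rw [h1]
          have := hx i
          nlinarith [abs_nonneg (x i - c i)]
      _ = n * r ^ 2 := by simp [mul_comm]
  have hcompact : IsCompact {x : Rn n | ∀ i, |x i - c i| ≤ r} :=
    (Metric.isCompact_of_isClosed_isBounded hclosed
      (Metric.isBounded_closedBall.subset hbdd))
  refine ⟨hclosed.measurableSet, ?_, ?_, hcompact⟩
  · exact lt_of_lt_of_le (Metric.measure_ball_pos volume c hr) (measure_mono hsub)
  · exact lt_of_le_of_lt (measure_mono hbdd) (measure_closedBall_lt_top)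

lemma wSet_lt_top {n : ℕ} {v : Rn n → ℝ} (hv : IsWeight v) {Q : Set (Rn n)}
    (hQ : IsCompact Q) : wSet v Q < ∞ := by
  have hi : IntegrableOn v Q := hv.2.integrableOn_isCompact hQ
  refine lt_of_le_of_lt ?_ hi.2
  exact lintegral_mono fun x => Real.ofReal_le_enorm (v x)

lemma wSet_pos {n : ℕ} {v : Rn n → ℝ} (hv : IsWeight v) {Q : Set (Rn n)}
    (hQm : MeasurableSet Q) (hQ : 0 < volume Q) : 0 < wSet v Q := by
  rcases eq_or_lt_of_le (zero_le : (0:ℝ≥0∞) ≤ wSet v Q) with h | h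
  · exfalso
    have ham : AEMeasurable (fun x => ENNReal.ofReal (v x)) (volume.restrict Q) :=
      (hv.2.aestronglyMeasurable.aemeasurable.restrict).ennreal_ofReal
    rw [wSet] at h
    have h0 : (fun x => ENNReal.ofReal (v x)) =ᵐ[volume.restrict Q] 0 :=
      (lintegral_eq_zero_iff' ham).mp h.symm
    have h2 : ∀ᵐ x ∂(volume.restrict Q), False := by
      filter_upwards [h0] with x hx
      have : 0 < ENNReal.ofReal (v x) := ENNReal.ofReal_pos.mpr (hv.1 x)
      simp [hx] at this
    rw [ae_iff] at h2
    simp only [not_false_iff, Set.setOf_true, Measure.restrict_apply_univ] at h2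
    exact absurd h2 hQ.ne'
  · exact h

lemma wSet_mono {n : ℕ} (v : Rn n → ℝ) {A B : Set (Rn n)} (h : A ⊆ B) :
    wSet v A ≤ wSet v B :=
  lintegral_mono' (Measure.restrict_mono h le_rfl) le_rfl

lemma wSet_null {n : ℕ} (v : Rn n → ℝ) {N : Set (Rn n)} (h : volume N = 0) :
    wSet v N = 0 := by
  unfold wSet
  rw [Measure.restrict_eq_zero.mpr h, lintegral_zero_measure]

lemma wSet_union_le {n : ℕ} (v : Rn n → ℝ) (A B : Set (Rn n)) :
    wSet v (A ∪ B) ≤ wSet v A + wSet v B := by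
  unfold wSet
  calc ∫⁻ x in A ∪ B, ENNReal.ofReal (v x) ≤
      ∫⁻ x, ENNReal.ofReal (v x) ∂(volume.restrict A + volume.restrict B) :=
        lintegral_mono' (Measure.restrict_union_le A B) le_rfl
    _ = _ := lintegral_add_measure _ _ _

lemma le_maximal {n : ℕ} {Q : Set (Rn n)} (hQ : IsCube Q) {x : Rn n} (hx : x ∈ Q)
    (f : Rn n → ℝ) :
    (volume Q)⁻¹ * ∫⁻ y in Q, ENNReal.ofReal |f y| ≤ maximal f x :=
  le_iSup_of_le Q (le_iSup_of_le hQ (le_iSup_of_le hx le_rfl))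

lemma lint_indicator {n : ℕ} {S Q : Set (Rn n)} (hS : MeasurableSet S) (hSQ : S ⊆ Q) :
    ∫⁻ y in Q, ENNReal.ofReal |S.indicator (fun _ => (1:ℝ)) y| = volume S := by
  have h1 : (fun y => ENNReal.ofReal |S.indicator (fun _ => (1:ℝ)) y|)
      = S.indicator (fun _ => (1:ℝ≥0∞)) := by
    funext y; by_cases hy : y ∈ S <;> simp [hy]
  rw [h1, lintegral_indicator hS, setLIntegral_one, Measure.restrict_apply hS,
    Set.inter_eq_self_of_subset_left hSQ]

lemma wLp1_indicator {n : ℕ} (q : ℝ) (hq : 0 < q) (v : Rn n → ℝ) (S : Set (Rn n)) :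
    wLp1 q v (ennAbs (S.indicator fun _ => (1:ℝ))) = ENNReal.ofReal q * (wSet v S) ^ (1 / q) := by
  unfold wLp1
  congr 1
  have hd : ∀ y : ℝ, 0 < y →
      distrib v (ennAbs (S.indicator fun _ => (1:ℝ))) y
        = if y < 1 then wSet v S else 0 := by
    intro y hy
    unfold distrib
    split_ifs with h1
    · congr 1
      ext x
      by_cases hx : x ∈ S <;>
        simp [ennAbs, hx, ENNReal.ofReal_lt_ofReal_iff_of_nonneg hy.le, h1, hy.le]
    · have : {x | ENNReal.ofReal y < ennAbs (S.indicator fun _ => (1:ℝ)) x} = ∅ := by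
        ext x
        by_cases hx : x ∈ S <;>
          simp [ennAbs, hx, ENNReal.ofReal_lt_ofReal_iff_of_nonneg hy.le, h1, not_lt.mp h1, hy.le]
      rw [this]
      simp [wSet]
  calc ∫⁻ y in Set.Ioi (0:ℝ), (distrib v (ennAbs (S.indicator fun _ => (1:ℝ))) y) ^ (1/q)
      = ∫⁻ y in Set.Ioi (0:ℝ), (Set.Iio (1:ℝ)).indicator (fun _ => (wSet v S) ^ (1/q)) y := by
        apply setLIntegral_congr_fun measurableSet_Ioi
        intro y hy
        beta_reduce
        rw [hd y hy]
        by_cases h1 : y < 1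
        · simp [h1, Set.indicator_of_mem (Set.mem_Iio.mpr h1)]
        · rw [if_neg h1, Set.indicator_of_notMem (fun h => h1 (Set.mem_Iio.mp h)),
            ENNReal.zero_rpow_of_pos (one_div_pos.mpr hq)]
    _ = (wSet v S) ^ (1/q) := by
        rw [lintegral_indicator measurableSet_Iio, Measure.restrict_restrict measurableSet_Iio,
          setLIntegral_const]
        have : Set.Iio (1:ℝ) ∩ Set.Ioi 0 = Set.Ioo 0 1 := by ext t; simp [and_comm]
        rw [this, Real.volume_Ioo]
        simp



lemma restrictedCond {n : ℕ} (pa pb p : ℝ) (hpa : 0 < pa) (hpb : 0 < pb) (hp : 0 < p)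
    {v u w : Rn n → ℝ} (hv : IsWeight v) (hu : IsWeight u)
    {C : ℝ} (hC : 0 < C)
    (hcmp : ∀ Q : Set (Rn n), IsCube Q →
      (wSet v Q)^(1/pa) * (wSet u Q)^(1/pb) ≤ ENNReal.ofReal C * (wSet w Q)^(1/p))
    {C' : ℝ} (hC' : 0 < C')
    (hb : ∀ f g : Rn n → ℝ, Measurable f → Measurable g →
      wLpInfty p w (Mprod f g) ≤
        ENNReal.ofReal C' * wLp1 pa v (ennAbs f) * wLp1 pb u (ennAbs g))
    {Q : Set (Rn n)} (hQ : IsCube Q) {S : Set (Rn n)} (hS : MeasurableSet S) (hSQ : S ⊆ Q) :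
    volume S * (wSet v Q)^(1/pa) ≤
      ENNReal.ofReal (C*C'*pa*pb) * (wSet v S)^(1/pa) * volume Q := by
  obtain ⟨hQm, hQpos, hQfin, hQcomp⟩ := cube_facts hQ
  set L := volume Q with hL
  set f : Rn n → ℝ := S.indicator fun _ => (1:ℝ) with hfdef
  set g : Rn n → ℝ := Q.indicator fun _ => (1:ℝ) with hgdef
  have hf : Measurable f := measurable_const.indicator hS
  have hg : Measurable g := measurable_const.indicator hQm
  set m : ℝ≥0∞ := volume S * L⁻¹ with hm
  have hmfin : m < ∞ := by
    apply ENNReal.mul_lt_top (lt_of_le_of_lt (measure_mono hSQ) hQfin)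
    simpa using (ENNReal.inv_lt_top).mpr hQpos
  -- Step 1 : pointwise lower bound for Mprod on Q
  have hpt : ∀ x ∈ Q, m ≤ Mprod f g x := by
    intro x hx
    have m1 : L⁻¹ * volume S ≤ maximal f x := by
      rw [← lint_indicator hS hSQ]; exact le_maximal hQ hx f
    have m2 : (1:ℝ≥0∞) ≤ maximal g x := by
      have := le_maximal hQ hx g
      rwa [lint_indicator hQm subset_rfl, ← hL, ENNReal.inv_mul_cancel hQpos.ne' hQfin.ne]
        at this
    calc m = (L⁻¹ * volume S) * 1 := by rw [mul_one, hm, mul_comm]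
      _ ≤ maximal f x * maximal g x := mul_le_mul' m1 m2
      _ = Mprod f g x := rfl
  -- Step 2 : m * (wSet w Q)^(1/p) ≤ RHS0
  set A : ℝ≥0∞ := (wSet w Q)^(1/p) with hA
  set R : ℝ≥0∞ := ENNReal.ofReal C' * wLp1 pa v (ennAbs f) * wLp1 pb u (ennAbs g) with hR
  have step2 : m * A ≤ R := by
    apply ENNReal.mul_le_of_forall_lt
    intro a' ha' b' hb'
    rcases eq_or_ne a' 0 with h0 | h0
    · simp [h0]
    have ha'top : a' ≠ ∞ := (ha'.trans hmfin).ne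
    set y := a'.toReal with hy
    have hy0 : 0 < y := ENNReal.toReal_pos h0 ha'top
    have hay : a' = ENNReal.ofReal y := (ENNReal.ofReal_toReal ha'top).symm
    have hQsub : Q ⊆ {x | ENNReal.ofReal y < Mprod f g x} := by
      intro x hx
      exact lt_of_lt_of_le (hay ▸ ha') (hpt x hx)
    have hdist : wSet w Q ≤ distrib w (Mprod f g) y := wSet_mono w hQsub
    calc a' * b' ≤ ENNReal.ofReal y * A := by
          rw [← hay]; exact mul_le_mul' le_rfl hb'.le
      _ ≤ ENNReal.ofReal y * (distrib w (Mprod f g) y)^(1/p) :=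
          mul_le_mul' le_rfl (ENNReal.rpow_le_rpow hdist (one_div_pos.mpr hp).le)
      _ ≤ wLpInfty p w (Mprod f g) := le_iSup_of_le y (le_iSup_of_le hy0 le_rfl)
      _ ≤ R := hb f g hf hg
  -- Step 3/4 : use comparability and compute R
  have hReq : ENNReal.ofReal C * R =
      ENNReal.ofReal (C*C'*pa*pb) * (wSet v S)^(1/pa) * (wSet u Q)^(1/pb) := by
    rw [hR, wLp1_indicator pa hpa v S, wLp1_indicator pb hpb u Q]
    rw [show C*C'*pa*pb = ((C*C')*pa)*pb by ring, ENNReal.ofReal_mul (by positivity),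
      ENNReal.ofReal_mul (by positivity), ENNReal.ofReal_mul (by positivity)]
    ring
  have step3 : m * ((wSet v Q)^(1/pa) * (wSet u Q)^(1/pb)) ≤
      ENNReal.ofReal (C*C'*pa*pb) * (wSet v S)^(1/pa) * (wSet u Q)^(1/pb) := by
    calc m * ((wSet v Q)^(1/pa) * (wSet u Q)^(1/pb))
        ≤ m * (ENNReal.ofReal C * A) := mul_le_mul' le_rfl (hcmp Q hQ)
      _ = ENNReal.ofReal C * (m * A) := by ring
      _ ≤ ENNReal.ofReal C * R := mul_le_mul' le_rfl step2
      _ = _ := hReq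
  -- Step 5 : cancel (wSet u Q)^(1/pb)
  have huQ0 : wSet u Q ≠ 0 := (wSet_pos hu hQm hQpos).ne'
  have huQtop : wSet u Q ≠ ∞ := (wSet_lt_top hu hQcomp).ne
  have hB0 : (wSet u Q)^(1/pb) ≠ 0 := (ENNReal.rpow_pos (wSet_pos hu hQm hQpos) huQtop).ne'
  have hBtop : (wSet u Q)^(1/pb) ≠ ∞ :=
    ENNReal.rpow_ne_top_of_nonneg (by positivity) huQtop
  have step5 : m * (wSet v Q)^(1/pa) ≤ ENNReal.ofReal (C*C'*pa*pb) * (wSet v S)^(1/pa) := by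
    rw [← ENNReal.mul_le_mul_iff_left hB0 hBtop]
    calc m * (wSet v Q)^(1/pa) * (wSet u Q)^(1/pb)
        = m * ((wSet v Q)^(1/pa) * (wSet u Q)^(1/pb)) := by ring
      _ ≤ _ := step3
  -- Step 6 : multiply by L
  calc volume S * (wSet v Q)^(1/pa)
      = m * (wSet v Q)^(1/pa) * L := by
        rw [hm]
        rw [show volume S * L⁻¹ * (wSet v Q)^(1/pa) * L
          = volume S * (wSet v Q)^(1/pa) * (L⁻¹ * L) by ring,
          ENNReal.inv_mul_cancel hQpos.ne' hQfin.ne, mul_one]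
    _ ≤ ENNReal.ofReal (C*C'*pa*pb) * (wSet v S)^(1/pa) * L := mul_le_mul_left step5 L

lemma memApR_of_restricted {n : ℕ} (q : ℝ) (hq : 1 ≤ q) {v : Rn n → ℝ} (hv : IsWeight v)
    {K : ℝ} (hK : 0 < K)
    (hres : ∀ Q : Set (Rn n), IsCube Q → ∀ S : Set (Rn n), MeasurableSet S → S ⊆ Q →
      volume S * (wSet v Q)^(1/q) ≤ ENNReal.ofReal K * (wSet v S)^(1/q) * volume Q) :
    MemApR q v := by
  have hq0 : 0 < q := lt_of_lt_of_le one_pos hq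
  rw [MemApR]
  have hbound : AprConst q v ≤ ENNReal.ofReal (2*K) := by
    rw [AprConst]
    apply iSup₂_le
    intro Q hQ
    obtain ⟨hQm, hQpos, hQfin, hQcomp⟩ := cube_facts hQ
    set L := volume Q with hLdef
    set W := wSet v Q with hWdef
    have hW0 : W ≠ 0 := (wSet_pos hv hQm hQpos).ne'
    have hWtop : W ≠ ∞ := (wSet_lt_top hv hQcomp).ne
    set F : Rn n → ℝ≥0∞ := Q.indicator fun y => ENNReal.ofReal (v y)⁻¹ with hFdef
    -- measurable representative
    obtain ⟨v', hv'sm, hvv'⟩ := hv.2.aestronglyMeasurable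
    have hv'meas : Measurable v' := hv'sm.measurable
    set N : Set (Rn n) := {x | ¬ v x = v' x} with hNdef
    have hN : volume N = 0 := ae_iff.mp hvv'
    set T : ℝ → Set (Rn n) := fun t => Q ∩ {x | t < (v' x)⁻¹} with hTdef
    have hTm : ∀ t : ℝ, MeasurableSet (T t) := fun t =>
      hQm.inter (measurableSet_lt measurable_const hv'meas.inv)
    have hTQ : ∀ t : ℝ, T t ⊆ Q := fun t => Set.inter_subset_left
    -- inclusion of the superlevel sets
    have hincl : ∀ t : ℝ, 0 ≤ t → {x | ENNReal.ofReal t < F x} ⊆ T t ∪ N := by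
      intro t ht x hx
      simp only [Set.mem_setOf_eq, hFdef] at hx
      by_cases hxQ : x ∈ Q
      · rw [Set.indicator_of_mem hxQ] at hx
        have hxt : t < (v x)⁻¹ := by
          by_contra hcon
          exact absurd hx (not_lt.mpr (ENNReal.ofReal_le_ofReal (not_lt.mp hcon)))
        by_cases hxN : x ∈ N
        · exact Or.inr hxN
        · have hveq : v x = v' x := not_not.mp hxN
          exact Or.inl ⟨hxQ, show t < (v' x)⁻¹ by rw [← hveq]; exact hxt⟩
      · rw [Set.indicator_of_notMem hxQ] at hx
        exact absurd hx (by simp)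
    -- the measure bound on T t
    have hTbound : ∀ t : ℝ, 0 < t → wSet v (T t) ≤ ENNReal.ofReal (1/t) * volume (T t) := by
      intro t ht
      have hcongr : wSet v (T t) = ∫⁻ x in T t, ENNReal.ofReal (v' x) := by
        apply lintegral_congr_ae
        filter_upwards [ae_restrict_of_ae hvv'] with x hx
        rw [hx]
      rw [hcongr]
      calc ∫⁻ x in T t, ENNReal.ofReal (v' x)
          ≤ ∫⁻ _x in T t, ENNReal.ofReal (1/t) := by
            apply setLIntegral_mono measurable_const
            intro x hx
            obtain ⟨hxQ, hxt⟩ := hx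
            have hv'pos : 0 < v' x := by
              by_contra hcon
              have : (v' x)⁻¹ ≤ 0 := inv_nonpos.mpr (not_lt.mp hcon)
              simp only [Set.mem_setOf_eq] at hxt
              linarith
            have h1 : t < 1 / v' x := by
              simp only [Set.mem_setOf_eq] at hxt; rwa [inv_eq_one_div] at hxt
            have h2 : v' x ≤ 1/t := by
              rw [lt_div_iff₀ hv'pos] at h1
              rw [le_div_iff₀ ht]
              linarith
            exact ENNReal.ofReal_le_ofReal h2
        _ = ENNReal.ofReal (1/t) * volume (T t) := by
            rw [setLIntegral_const]
    -- consequences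
    have hAfin : ∀ t : ℝ, wSet v (T t) ≠ ∞ := fun t =>
      ((wSet_mono v (hTQ t)).trans_lt (wSet_lt_top hv hQcomp)).ne
    have hchain : ∀ t : ℝ, 0 < t → ENNReal.ofReal t * wSet v (T t) ≤ volume (T t) := by
      intro t ht
      calc ENNReal.ofReal t * wSet v (T t)
          ≤ ENNReal.ofReal t * (ENNReal.ofReal (1/t) * volume (T t)) :=
            mul_le_mul' le_rfl (hTbound t ht)
        _ = ENNReal.ofReal (t * (1/t)) * volume (T t) := by
            rw [ENNReal.ofReal_mul ht.le, mul_assoc]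
        _ = volume (T t) := by rw [mul_one_div_cancel ht.ne', ENNReal.ofReal_one, one_mul]
    have hdist_le : ∀ t : ℝ, 0 ≤ t → distrib v F t ≤ wSet v (T t) := by
      intro t ht
      calc distrib v F t ≤ wSet v (T t ∪ N) := wSet_mono v (hincl t ht)
        _ ≤ wSet v (T t) + wSet v N := wSet_union_le v _ _
        _ = wSet v (T t) := by rw [wSet_null v hN, add_zero]
    rcases eq_or_lt_of_le hq with hq1 | hq1
    · -- case q = 1
      subst hq1
      rw [if_pos rfl]
      set M' : ℝ≥0∞ := ENNReal.ofReal (2*K) * L / W with hM'def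
      have hnum : ENNReal.ofReal (2*K) * L ≠ 0 :=
        mul_ne_zero (by simp only [ne_eq, ENNReal.ofReal_eq_zero, not_le]; linarith) hQpos.ne'
      have hM'0 : M' ≠ 0 := by
        rw [hM'def]
        simp only [ne_eq, ENNReal.div_eq_zero_iff, not_or]
        exact ⟨hnum, hWtop⟩
      have hM'top : M' ≠ ∞ :=
        (ENNReal.div_lt_top (ENNReal.mul_ne_top ENNReal.ofReal_ne_top hQfin.ne) hW0).ne
      set m' := M'.toReal with hm'def
      have hm'0 : 0 < m' := ENNReal.toReal_pos hM'0 hM'top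
      have hm'eq : ENNReal.ofReal m' = M' := ENNReal.ofReal_toReal hM'top
      have hT0 : wSet v (T m') = 0 := by
        by_contra hA0
        have hAfin' := hAfin m'
        have hr := hres Q hQ (T m') (hTm m') (hTQ m')
        rw [show (1:ℝ)/1 = 1 from by norm_num, ENNReal.rpow_one, ENNReal.rpow_one] at hr
        have h1 : (ENNReal.ofReal m' * W) * wSet v (T m') ≤
            (ENNReal.ofReal K * L) * wSet v (T m') := by
          calc (ENNReal.ofReal m' * W) * wSet v (T m')
              = ENNReal.ofReal m' * wSet v (T m') * W := by ring
            _ ≤ volume (T m') * W := mul_le_mul_left (hchain m' hm'0) W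
            _ ≤ ENNReal.ofReal K * wSet v (T m') * L := hr
            _ = (ENNReal.ofReal K * L) * wSet v (T m') := by ring
        have h2 : ENNReal.ofReal m' * W ≤ ENNReal.ofReal K * L :=
          (ENNReal.mul_le_mul_iff_left hA0 hAfin').mp h1
        rw [hm'eq] at h2
        have h3 : M' * W = ENNReal.ofReal (2*K) * L := by
          rw [hM'def]
          exact ENNReal.div_mul_cancel hW0 hWtop
        rw [h3] at h2
        have h4 : (2*K) ≤ K := (ENNReal.ofReal_le_ofReal_iff hK.le).mp
          ((ENNReal.mul_le_mul_iff_left hQpos.ne' hQfin.ne).mp h2)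
        linarith
      have hae : F ≤ᵐ[volume.withDensity fun x => ENNReal.ofReal (v x)] fun _ => M' := by
        rw [Filter.EventuallyLE, ae_iff]
        have hsub : {x | ¬ F x ≤ M'} ⊆ T m' ∪ N := by
          intro x hx
          simp only [Set.mem_setOf_eq, not_le] at hx
          apply hincl m' hm'0.le
          rw [Set.mem_setOf_eq, hm'eq]
          exact hx
        refine measure_mono_null hsub ?_
        have h5 : (volume.withDensity fun x => ENNReal.ofReal (v x)) (T m') = 0 := by
          rw [withDensity_apply _ (hTm m')]; exact hT0
        have h6 : (volume.withDensity fun x => ENNReal.ofReal (v x)) N = 0 :=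
          (withDensity_absolutelyContinuous volume _) hN
        exact measure_union_null h5 h6
      have hess : wLinfty v F ≤ M' := essSup_le_of_ae_le M' hae
      rw [ENNReal.div_le_iff_le_mul (Or.inl hQpos.ne') (Or.inl hQfin.ne)]
      rw [show (1:ℝ)/1 = 1 from by norm_num, ENNReal.rpow_one]
      calc W * wLinfty v F ≤ W * M' := mul_le_mul' le_rfl hess
        _ = ENNReal.ofReal (2*K) * L := by
            rw [hM'def]
            exact ENNReal.mul_div_cancel hW0 hWtop
    · -- case 1 < q
      rw [if_neg hq1.ne']
      set e : ℝ := 1 - 1/q with hedef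
      have he0 : 0 < e := by
        have h1q : 1/q < 1 := by rw [div_lt_one hq0]; exact hq1
        simp only [hedef]; linarith
      have hqe : 1/(q/(q-1)) = e := by
        rw [one_div_div, hedef]
        field_simp
      rw [ENNReal.div_le_iff_le_mul (Or.inl hQpos.ne') (Or.inl hQfin.ne)]
      simp only [wLpInfty, hqe]
      rw [ENNReal.mul_iSup]
      apply iSup_le; intro y
      rw [ENNReal.mul_iSup]
      apply iSup_le; intro hy
      set A := wSet v (T y) with hAdef
      have hdA : distrib v F y ≤ A := hdist_le y hy.le
      rcases eq_or_ne A 0 with hA0 | hA0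
      · have hd0 : distrib v F y = 0 := le_antisymm (hA0 ▸ hdA) zero_le
        rw [hd0, ENNReal.zero_rpow_of_pos he0]
        simp
      · have hAfin' : A ≠ ∞ := hAfin y
        have hApow0 : A^(1/q) ≠ 0 :=
          (ENNReal.rpow_pos (pos_iff_ne_zero.mpr hA0) hAfin').ne'
        have hApowtop : A^(1/q) ≠ ∞ :=
          ENNReal.rpow_ne_top_of_nonneg (by positivity) hAfin'
        have h1 : ENNReal.ofReal y * A * W^(1/q) ≤ ENNReal.ofReal K * A^(1/q) * L := by
          calc ENNReal.ofReal y * A * W^(1/q)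
              ≤ volume (T y) * W^(1/q) := mul_le_mul_left (hchain y hy) _
            _ ≤ _ := hres Q hQ (T y) (hTm y) (hTQ y)
        have hsplit : A = A^e * A^(1/q) := by
          rw [← ENNReal.rpow_add e (1/q) hA0 hAfin']
          rw [show e + 1/q = 1 from by simp [hedef], ENNReal.rpow_one]
        have h2 : ENNReal.ofReal y * A^e * W^(1/q) ≤ ENNReal.ofReal K * L := by
          rw [← ENNReal.mul_le_mul_iff_left hApow0 hApowtop]
          calc (ENNReal.ofReal y * A^e * W^(1/q)) * A^(1/q)
              = ENNReal.ofReal y * (A^e * A^(1/q)) * W^(1/q) := by ring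
            _ = ENNReal.ofReal y * A * W^(1/q) := by rw [← hsplit]
            _ ≤ ENNReal.ofReal K * A^(1/q) * L := h1
            _ = (ENNReal.ofReal K * L) * A^(1/q) := by ring
        calc W^(1/q) * (ENNReal.ofReal y * (distrib v F y)^e)
            ≤ W^(1/q) * (ENNReal.ofReal y * A^e) :=
              mul_le_mul' le_rfl (mul_le_mul' le_rfl (ENNReal.rpow_le_rpow hdA he0.le))
          _ = ENNReal.ofReal y * A^e * W^(1/q) := by ring
          _ ≤ ENNReal.ofReal K * L := h2
          _ ≤ ENNReal.ofReal (2*K) * L :=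
              mul_le_mul_left (ENNReal.ofReal_le_ofReal (by linarith)) L
  exact (lt_of_le_of_lt hbound ENNReal.ofReal_lt_top).ne

/-- restricted weak boundedness of M⊗ implies wᵢ ∈ A_{pᵢ}^𝓡, assuming only
the comparability w₁(Q)^{1/p₁} w₂(Q)^{1/p₂} ≈ w(Q)^{1/p} on cubes. -/
theorem stmt_9 {n : ℕ} (p p₁ p₂ : ℝ) (hp₁ : 1 ≤ p₁) (hp₂ : 1 ≤ p₂)
    (hp : 1 / p = 1 / p₁ + 1 / p₂)
    (w₁ w₂ : Rn n → ℝ) (hw₁ : IsWeight w₁) (hw₂ : IsWeight w₂)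
    (w : Rn n → ℝ) (hw : ∀ x, w x = w₁ x ^ (p / p₁) * w₂ x ^ (p / p₂))
    (hcmp : ∃ c C : ℝ, 0 < c ∧ 0 < C ∧ ∀ Q : Set (Rn n), IsCube Q →
      ENNReal.ofReal c * (wSet w Q) ^ (1 / p) ≤
          (wSet w₁ Q) ^ (1 / p₁) * (wSet w₂ Q) ^ (1 / p₂) ∧
        (wSet w₁ Q) ^ (1 / p₁) * (wSet w₂ Q) ^ (1 / p₂) ≤
          ENNReal.ofReal C * (wSet w Q) ^ (1 / p))
    (hbdd : ∃ C' : ℝ, 0 < C' ∧ ∀ f g : Rn n → ℝ, Measurable f → Measurable g →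
      wLpInfty p w (Mprod f g) ≤
        ENNReal.ofReal C' * wLp1 p₁ w₁ (ennAbs f) * wLp1 p₂ w₂ (ennAbs g)) :
    MemApR p₁ w₁ ∧ MemApR p₂ w₂ := by
  obtain ⟨c, C, hc, hC, hcmp'⟩ := hcmp
  obtain ⟨C', hC', hb⟩ := hbdd
  have hp₁0 : 0 < p₁ := lt_of_lt_of_le one_pos hp₁
  have hp₂0 : 0 < p₂ := lt_of_lt_of_le one_pos hp₂
  have hp0 : 0 < p := by
    have h1 : 0 < 1/p := by rw [hp]; positivity
    exact one_div_pos.mp h1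
  constructor
  · apply memApR_of_restricted p₁ hp₁ hw₁ (K := C*C'*p₁*p₂) (by positivity)
    intro Q hQ S hS hSQ
    exact restrictedCond p₁ p₂ p hp₁0 hp₂0 hp0 hw₁ hw₂ hC
      (fun Q' hQ' => (hcmp' Q' hQ').2) hC' hb hQ hS hSQ
  · apply memApR_of_restricted p₂ hp₂ hw₂ (K := C*C'*p₂*p₁) (by positivity)
    intro Q hQ S hS hSQ
    have hcmp2 : ∀ Q' : Set (Rn n), IsCube Q' →
        (wSet w₂ Q')^(1/p₂) * (wSet w₁ Q')^(1/p₁) ≤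
          ENNReal.ofReal C * (wSet w Q')^(1/p) := by
      intro Q' hQ'
      rw [mul_comm]
      exact (hcmp' Q' hQ').2
    have hb2 : ∀ f g : Rn n → ℝ, Measurable f → Measurable g →
        wLpInfty p w (Mprod f g) ≤
          ENNReal.ofReal C' * wLp1 p₂ w₂ (ennAbs f) * wLp1 p₁ w₁ (ennAbs g) := by
      intro f g hf hg
      have h := hb g f hg hf
      rw [show Mprod g f = Mprod f g from funext fun x => mul_comm _ _] at h
      calc wLpInfty p w (Mprod f g) ≤
          ENNReal.ofReal C' * wLp1 p₁ w₁ (ennAbs g) * wLp1 p₂ w₂ (ennAbs f) := h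
        _ = _ := by ring
    exact restrictedCond p₂ p₁ p hp₂0 hp₁0 hp0 hw₂ hw₁ hC hcmp2 hC' hb2 hQ hS hSQ
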